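/- Let N+ be a rooted binary phylogenetic network on n ≥ 5 taxa, and suppose {a,b,c,d} and {b,c,d,e} are B-quartets on N+. Then either the 5-element set {a,b,c,d,e} determines the blob of N+ determined by {b,c,d} (so in particular that blob is an m-blob with m ≥ 5), or there is a cut edge of N+ whose deletion leaves a and e in one connected component and b, c, d in the other. -/

import Mathlib

/-!
# Common framework

Finite directed multigraphs, undirected connectivity, numbers of connected
components, cut edges, subgraphs, blobs, blobs determined by leaf sets,
B-quartets, and quartets displayed via cut-edge separation.

A *network* is modelled as a finite directed multigraph (edge directions are
simply ignored for the undirected notions of connectivity, cut edges and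
blobs).
-/

/-- A finite directed multigraph: finite types of nodes and of edges, with
source and target maps. -/
structure MDigraph where
  V : Type
  E : Type
  finV : Finite V
  finE : Finite E
  src : E → V
  tgt : E → V

attribute [instance] MDigraph.finV MDigraph.finE

namespace MDigraph

section Basic

variable (G : MDigraph)

/-- One undirected step between `u` and `v` along an edge from the set `F`. -/
def Step (F : Set G.E) (u v : G.V) : Prop :=
  ∃ e ∈ F, (G.src e = u ∧ G.tgt e = v) ∨ (G.src e = v ∧ G.tgt e = u)

/-- Undirected reachability (an undirected path) using only edges in `F`. -/
def Conn (F : Set G.E) (u v : G.V) : Prop :=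
  Relation.ReflTransGen (G.Step F) u v

/-- One directed step from `u` to `v` along an edge from the set `F`. -/
def DStep (F : Set G.E) (u v : G.V) : Prop :=
  ∃ e ∈ F, G.src e = u ∧ G.tgt e = v

/-- Directed reachability (a directed path) using only edges in `F`. -/
def DConn (F : Set G.E) (u v : G.V) : Prop :=
  Relation.ReflTransGen (G.DStep F) u v

/-- `u` is above (ancestral to) `v`: there is a directed path from `u` to `v`. -/
def Above (u v : G.V) : Prop := G.DConn Set.univ u v

/-- In-degree of a node. -/
noncomputable def inDeg (v : G.V) : ℕ := Nat.card {e : G.E // G.tgt e = v}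

/-- Out-degree of a node. -/
noncomputable def outDeg (v : G.V) : ℕ := Nat.card {e : G.E // G.src e = v}

/-- Undirected degree of a node (a loop counts twice). -/
noncomputable def degree (v : G.V) : ℕ := G.inDeg v + G.outDeg v

/-- The number of connected components of the graph with node set `W` and edge
set the restriction to `W` of `F` (two nodes of `W` lie in the same connected
component iff they are joined by an undirected path). -/
noncomputable def numComponents (W : Set G.V) (F : Set G.E) : ℕ :=
  Nat.card (Quot (fun u v : W => G.Step {e ∈ F | G.src e ∈ W ∧ G.tgt e ∈ W} u.1 v.1))

/-- `v` lies on every directed path from `u` to `w`: there is no directed path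
from `u` to `w` all of whose nodes avoid `v`. -/
def OnEveryPath (v u w : G.V) : Prop :=
  ¬ (u ≠ v ∧ w ≠ v ∧
      Relation.ReflTransGen (fun a b => G.DStep Set.univ a b ∧ a ≠ v ∧ b ≠ v) u w)

end Basic

/-- A subgraph (subnetwork): a set of nodes together with a set of edges
joining them. -/
structure Subgraph (G : MDigraph) where
  verts : Set G.V
  edges : Set G.E
  src_mem : ∀ e ∈ edges, G.src e ∈ verts
  tgt_mem : ∀ e ∈ edges, G.tgt e ∈ verts

/-- The whole graph, as a subgraph of itself. -/
def top (G : MDigraph) : Subgraph G :=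
  ⟨Set.univ, Set.univ, fun _ _ => Set.mem_univ _, fun _ _ => Set.mem_univ _⟩

namespace Subgraph

variable {G : MDigraph}

/-- Containment of subgraphs. -/
def le (H K : Subgraph G) : Prop := H.verts ⊆ K.verts ∧ H.edges ⊆ K.edges

/-- The subgraph `H` is connected. -/
def IsConnected (H : Subgraph G) : Prop :=
  H.verts.Nonempty ∧ ∀ u ∈ H.verts, ∀ v ∈ H.verts, G.Conn H.edges u v

/-- Delete an edge from a subgraph. -/
def deleteEdge (H : Subgraph G) (e : G.E) : Subgraph G :=
  ⟨H.verts, H.edges \ {e}, fun e' he' => H.src_mem e' he'.1,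
    fun e' he' => H.tgt_mem e' he'.1⟩

/-- The number of connected components of a subgraph. -/
noncomputable def numComponents (H : Subgraph G) : ℕ :=
  G.numComponents H.verts H.edges

/-- `e` is a cut edge of the (sub)graph `H`: deleting it increases the number
of connected components. -/
def IsCutEdge (H : Subgraph G) (e : G.E) : Prop :=
  e ∈ H.edges ∧ H.numComponents < (H.deleteEdge e).numComponents

end Subgraph

variable {G : MDigraph}

/-- `B` is a blob of the network `H`: a maximal connected subnetwork of `H`
having no cut edges.  (A blob is *trivial* if it consists of a single node.) -/
def IsBlobIn (H B : Subgraph G) : Prop :=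
  B.le H ∧ B.IsConnected ∧ (∀ e, ¬ B.IsCutEdge e) ∧
    ∀ B' : Subgraph G, B'.le H → B'.IsConnected → (∀ e, ¬ B'.IsCutEdge e) →
      B.le B' → B'.le B

/-- `e` is a cut edge of the network `H` incident to the blob `B`: exactly one
of its endpoints is a node of `B`. -/
def IncidentCut (H B : Subgraph G) (e : G.E) : Prop :=
  H.IsCutEdge e ∧ Xor' (G.src e ∈ B.verts) (G.tgt e ∈ B.verts)

/-- The blob `B` of the network `H` is determined by the set `S` of leaf
labels: deletion of the cut edges of `H` incident to `B` leaves the nodes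
labelled by the elements of `S` in distinct connected components. -/
def DeterminesIn {X : Type} (H B : Subgraph G) (leaf : X → G.V) (S : Set X) : Prop :=
  ∀ s ∈ S, ∀ t ∈ S, s ≠ t →
    ¬ G.Conn {e ∈ H.edges | ¬ IncidentCut H B e} (leaf s) (leaf t)

/-- Four taxa form a B-quartet on the network `H`: some blob of `H` is
determined by them. -/
def BQuartetIn {X : Type} (H : Subgraph G) (leaf : X → G.V) (a b c d : X) : Prop :=
  ∃ B : Subgraph G, IsBlobIn H B ∧ DeterminesIn H B leaf ({a, b, c, d} : Set X)

/-- Some cut edge of `H` separates the taxa `p, q` from the taxa `r, s`: after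
its deletion `p, q` lie in one connected component and `r, s` in another.  For
a 4-taxon set `{p,q,r,s}` this says exactly that the (reduced unrooted) tree of
blobs of `H` displays the resolved quartet `pq|rs` (the edges of the tree of
blobs correspond exactly to the cut edges of the network, and suppressing
degree-2 nodes or contracting blobs does not affect which taxa a cut edge
separates). -/
def CutSep {X : Type} (H : Subgraph G) (leaf : X → G.V) (p q r s : X) : Prop :=
  ∃ e, H.IsCutEdge e ∧
    G.Conn (H.edges \ {e}) (leaf p) (leaf q) ∧
    G.Conn (H.edges \ {e}) (leaf r) (leaf s) ∧
    ¬ G.Conn (H.edges \ {e}) (leaf p) (leaf r)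


variable {G : MDigraph}

lemma step_symm {F : Set G.E} {u v : G.V} (h : G.Step F u v) : G.Step F v u := by
  obtain ⟨e, he, h | h⟩ := h
  · exact ⟨e, he, Or.inr h⟩
  · exact ⟨e, he, Or.inl h⟩

lemma conn_symm {F : Set G.E} {u v : G.V} (h : G.Conn F u v) : G.Conn F v u := by
  haveI : Std.Symm (G.Step F) := ⟨fun _ _ h => step_symm h⟩
  exact (Relation.ReflTransGen.stdSymm (r := G.Step F)).symm _ _ h

lemma conn_mono {F F' : Set G.E} (hFF : F ⊆ F') {u v : G.V} (h : G.Conn F u v) :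
    G.Conn F' u v := by
  refine Relation.ReflTransGen.mono ?_ _ _ h
  rintro x y ⟨e, he, hd⟩
  exact ⟨e, hFF he, hd⟩

lemma eqvGen_iff_conn {W : Set G.V} {F : Set G.E}
    (hWF : ∀ e ∈ F, G.src e ∈ W ∧ G.tgt e ∈ W) (u v : W) :
    Relation.EqvGen (fun u v : W => G.Step {e ∈ F | G.src e ∈ W ∧ G.tgt e ∈ W} u.1 v.1) u v
      ↔ G.Conn F u.1 v.1 := by
  have hset : {e ∈ F | G.src e ∈ W ∧ G.tgt e ∈ W} = F := by
    ext e; exact ⟨fun h => h.1, fun h => ⟨h, hWF e h⟩⟩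
  constructor
  · intro h
    induction h with
    | rel x y h => rw [hset] at h; exact Relation.ReflTransGen.single h
    | refl x => exact Relation.ReflTransGen.refl
    | symm x y _ ih => exact conn_symm ih
    | trans x y z _ _ ih1 ih2 => exact ih1.trans ih2
  · intro h
    have main : ∀ x : G.V, G.Conn F x v.1 → ∀ hx : x ∈ W,
        Relation.EqvGen (fun u v : W => G.Step {e ∈ F | G.src e ∈ W ∧ G.tgt e ∈ W} u.1 v.1)
          ⟨x, hx⟩ v := by
      intro x hconn
      induction hconn using Relation.ReflTransGen.head_induction_on with
      | refl =>
          intro hx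
          have : (⟨v.1, hx⟩ : W) = v := Subtype.ext rfl
          rw [this]
          exact Relation.EqvGen.refl v
      | @head x c hstep _ ih =>
          intro hx
          obtain ⟨e, he, hd⟩ := hstep
          have hc : c ∈ W := by
            rcases hd with ⟨h1, h2⟩ | ⟨h1, h2⟩
            · exact h2 ▸ (hWF e he).2
            · exact h1 ▸ (hWF e he).1
          refine Relation.EqvGen.trans _ ⟨c, hc⟩ _ ?_ (ih hc)
          exact Relation.EqvGen.rel _ _ ⟨e, by rw [hset]; exact he, hd⟩
    have := main u.1 h u.2
    simpa using this

lemma numComponents_le_one {W : Set G.V} {F : Set G.E}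
    (hWF : ∀ e ∈ F, G.src e ∈ W ∧ G.tgt e ∈ W)
    (hconn : ∀ u ∈ W, ∀ v ∈ W, G.Conn F u v) :
    G.numComponents W F ≤ 1 := by
  have : Subsingleton (Quot (fun u v : W =>
      G.Step {e ∈ F | G.src e ∈ W ∧ G.tgt e ∈ W} u.1 v.1)) := by
    constructor
    intro q q'
    induction q using Quot.ind with | _ x =>
    induction q' using Quot.ind with | _ y =>
    exact Quot.eqvGen_sound ((eqvGen_iff_conn hWF x y).mpr (hconn x.1 x.2 y.1 y.2))
  exact Finite.card_le_one_iff_subsingleton.mpr this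

lemma one_le_numComponents {W : Set G.V} {F : Set G.E} (hW : W.Nonempty) :
    1 ≤ G.numComponents W F := by
  obtain ⟨w, hw⟩ := hW
  have : Nonempty (Quot (fun u v : W =>
      G.Step {e ∈ F | G.src e ∈ W ∧ G.tgt e ∈ W} u.1 v.1)) := ⟨Quot.mk _ ⟨w, hw⟩⟩
  exact Finite.card_pos

lemma two_le_numComponents {W : Set G.V} {F : Set G.E}
    (hWF : ∀ e ∈ F, G.src e ∈ W ∧ G.tgt e ∈ W) {u v : G.V}
    (hu : u ∈ W) (hv : v ∈ W) (hnc : ¬ G.Conn F u v) :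
    2 ≤ G.numComponents W F := by
  have hne : (Quot.mk _ ⟨u, hu⟩ : Quot (fun u v : W =>
      G.Step {e ∈ F | G.src e ∈ W ∧ G.tgt e ∈ W} u.1 v.1)) ≠ Quot.mk _ ⟨v, hv⟩ := by
    intro h
    exact hnc ((eqvGen_iff_conn hWF ⟨u, hu⟩ ⟨v, hv⟩).mp (Quot.eqvGen_exact h))
  exact Finite.one_lt_card_iff_nontrivial.mpr ⟨_, _, hne⟩

lemma conn_of_numComponents_le_one {W : Set G.V} {F : Set G.E}
    (hWF : ∀ e ∈ F, G.src e ∈ W ∧ G.tgt e ∈ W)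
    (h : G.numComponents W F ≤ 1) {u v : G.V} (hu : u ∈ W) (hv : v ∈ W) :
    G.Conn F u v := by
  have hs := Finite.card_le_one_iff_subsingleton.mp h
  have : (Quot.mk _ ⟨u, hu⟩ : Quot (fun u v : W =>
      G.Step {e ∈ F | G.src e ∈ W ∧ G.tgt e ∈ W} u.1 v.1)) = Quot.mk _ ⟨v, hv⟩ :=
    Subsingleton.elim _ _
  exact (eqvGen_iff_conn hWF ⟨u, hu⟩ ⟨v, hv⟩).mp (Quot.eqvGen_exact this)

namespace Subgraph

lemma hWF (H : Subgraph G) : ∀ e ∈ H.edges, G.src e ∈ H.verts ∧ G.tgt e ∈ H.verts :=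
  fun e he => ⟨H.src_mem e he, H.tgt_mem e he⟩

lemma hWF_del (H : Subgraph G) (g : G.E) :
    ∀ e ∈ H.edges \ {g}, G.src e ∈ H.verts ∧ G.tgt e ∈ H.verts :=
  fun e he => ⟨H.src_mem e he.1, H.tgt_mem e he.1⟩

lemma not_isCutEdge_of (H : Subgraph G) (hne : H.verts.Nonempty) (g : G.E)
    (hcn : ∀ u ∈ H.verts, ∀ v ∈ H.verts, G.Conn (H.edges \ {g}) u v) :
    ¬ H.IsCutEdge g := by
  rintro ⟨-, hlt⟩
  have h1 : 1 ≤ H.numComponents := one_le_numComponents hne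
  have h2 : (H.deleteEdge g).numComponents ≤ 1 :=
    numComponents_le_one (H.hWF_del g) hcn
  omega

lemma isCutEdge_of (H : Subgraph G) (hconn : H.IsConnected) {g : G.E} (hg : g ∈ H.edges)
    {u v : G.V} (hu : u ∈ H.verts) (hv : v ∈ H.verts)
    (hnc : ¬ G.Conn (H.edges \ {g}) u v) : H.IsCutEdge g := by
  refine ⟨hg, ?_⟩
  have h1 : H.numComponents ≤ 1 := numComponents_le_one H.hWF hconn.2
  have h2 : 2 ≤ (H.deleteEdge g).numComponents :=
    two_le_numComponents (H.hWF_del g) hu hv hnc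
  omega

lemma conn_del_of_not_isCutEdge (H : Subgraph G) (hconn : H.IsConnected) {g : G.E}
    (hg : g ∈ H.edges) (hncut : ¬ H.IsCutEdge g) {u v : G.V}
    (hu : u ∈ H.verts) (hv : v ∈ H.verts) : G.Conn (H.edges \ {g}) u v := by
  have h1 : H.numComponents ≤ 1 := numComponents_le_one H.hWF hconn.2
  have h2 : ¬ (H.numComponents < (H.deleteEdge g).numComponents) := fun h => hncut ⟨hg, h⟩
  have h3 : G.numComponents H.verts (H.edges \ {g}) = (H.deleteEdge g).numComponents := rfl
  exact conn_of_numComponents_le_one (H.hWF_del g) (by rw [h3]; omega) hu hv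

end Subgraph
lemma conn_del_of_detour {F : Set G.E} {g : G.E}
    (hdet : G.Conn (F \ {g}) (G.src g) (G.tgt g)) {u v : G.V} (h : G.Conn F u v) :
    G.Conn (F \ {g}) u v := by
  induction h using Relation.ReflTransGen.head_induction_on with
  | refl => exact Relation.ReflTransGen.refl
  | @head x c hstep _ ih =>
      obtain ⟨e, he, hd⟩ := hstep
      by_cases heg : e = g
      · subst heg
        rcases hd with ⟨h1, h2⟩ | ⟨h1, h2⟩
        · exact ((h1 ▸ h2 ▸ hdet)).trans ih
        · exact ((h1 ▸ h2 ▸ (conn_symm hdet))).trans ih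
      · exact Relation.ReflTransGen.head ⟨e, ⟨he, heg⟩, hd⟩ ih

lemma top_isConnected (hc : ∀ u v : G.V, G.Conn Set.univ u v) (v₀ : G.V) :
    (top G).IsConnected :=
  ⟨⟨v₀, trivial⟩, fun u _ v _ => hc u v⟩

lemma cut_top_iff (hc : ∀ u v : G.V, G.Conn Set.univ u v) {g : G.E} :
    (top G).IsCutEdge g ↔ ¬ G.Conn (Set.univ \ {g}) (G.src g) (G.tgt g) := by
  constructor
  · intro hcut hconn
    have hncut : ¬ (top G).IsCutEdge g := by
      apply Subgraph.not_isCutEdge_of _ ⟨G.src g, Set.mem_univ _⟩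
      intro u _ v _
      exact conn_del_of_detour hconn (hc u v)
    exact hncut hcut
  · intro hnc
    exact Subgraph.isCutEdge_of _ (top_isConnected hc (G.src g)) (Set.mem_univ _) (Set.mem_univ _) (Set.mem_univ _) hnc

lemma cross {F : Set G.E} {g : G.E}
    (hcut : ¬ G.Conn (F \ {g}) (G.src g) (G.tgt g)) {u v : G.V} (h : G.Conn F u v) :
    G.Conn (F \ {g}) u v ∨
      (G.Conn (F \ {g}) u (G.src g) ∧ G.Conn (F \ {g}) (G.tgt g) v) ∨
      (G.Conn (F \ {g}) u (G.tgt g) ∧ G.Conn (F \ {g}) (G.src g) v) := by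
  induction h using Relation.ReflTransGen.head_induction_on with
  | refl => exact Or.inl Relation.ReflTransGen.refl
  | @head x c hstep _ ih =>
      obtain ⟨e, he, hd⟩ := hstep
      by_cases heg : e = g
      · subst heg
        rcases hd with ⟨h1, h2⟩ | ⟨h1, h2⟩
        · -- src g = x, tgt g = c
          subst h1; subst h2
          rcases ih with h0 | ⟨h2a, h2b⟩ | ⟨h3a, h3b⟩
          · exact Or.inr (Or.inl ⟨Relation.ReflTransGen.refl, h0⟩)
          · exact absurd (conn_symm h2a) hcut
          · exact Or.inl h3b
        · -- src g = c, tgt g = x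
          subst h1; subst h2
          rcases ih with h0 | ⟨h2a, h2b⟩ | ⟨h3a, h3b⟩
          · exact Or.inr (Or.inr ⟨Relation.ReflTransGen.refl, h0⟩)
          · exact Or.inl h2b
          · exact absurd h3a hcut
      · rcases ih with h0 | ⟨h2a, h2b⟩ | ⟨h3a, h3b⟩
        · exact Or.inl (Relation.ReflTransGen.head ⟨e, ⟨he, heg⟩, hd⟩ h0)
        · exact Or.inr (Or.inl ⟨Relation.ReflTransGen.head ⟨e, ⟨he, heg⟩, hd⟩ h2a, h2b⟩)
        · exact Or.inr (Or.inr ⟨Relation.ReflTransGen.head ⟨e, ⟨he, heg⟩, hd⟩ h3a, h3b⟩)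

lemma conn_diff_finset {u v : G.V} (R : Finset G.E)
    (hcut : ∀ c ∈ R, ¬ G.Conn (Set.univ \ {c}) (G.src c) (G.tgt c))
    (hside : ∀ c ∈ R, G.Conn (Set.univ \ {c}) u v)
    {F : Set G.E} (hF : G.Conn F u v) :
    G.Conn (F \ ↑R) u v := by
  classical
  induction R using Finset.induction_on with
  | empty => simpa using hF
  | @insert c R' hcR' ih =>
      have hstep := ih (fun c hc => hcut c (Finset.mem_insert_of_mem hc))
        (fun c hc => hside c (Finset.mem_insert_of_mem hc))
      have hcc := hcut c (Finset.mem_insert_self c R')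
      have hsc := hside c (Finset.mem_insert_self c R')
      have hcut' : ¬ G.Conn ((F \ ↑R') \ {c}) (G.src c) (G.tgt c) := by
        intro h
        exact hcc (conn_mono (Set.diff_subset_diff_left (Set.subset_univ _)) h)
      have hseteq : (F \ ↑R') \ {c} = F \ ↑(insert c R') := by
        rw [Set.diff_diff, Finset.coe_insert, Set.insert_eq, Set.union_comm]
      rcases cross hcut' hstep with h0 | ⟨h2a, h2b⟩ | ⟨h3a, h3b⟩
      · rwa [hseteq] at h0
      · exfalso
        apply hcc
        have h2a' : G.Conn (Set.univ \ {c}) u (G.src c) :=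
          conn_mono (Set.diff_subset_diff_left (Set.subset_univ _)) h2a
        have h2b' : G.Conn (Set.univ \ {c}) (G.tgt c) v :=
          conn_mono (Set.diff_subset_diff_left (Set.subset_univ _)) h2b
        exact ((conn_symm h2a').trans hsc).trans (conn_symm h2b')
      · exfalso
        apply hcc
        have h3a' : G.Conn (Set.univ \ {c}) u (G.tgt c) :=
          conn_mono (Set.diff_subset_diff_left (Set.subset_univ _)) h3a
        have h3b' : G.Conn (Set.univ \ {c}) (G.src c) v :=
          conn_mono (Set.diff_subset_diff_left (Set.subset_univ _)) h3b
        exact (h3b'.trans (conn_symm hsc)).trans h3a'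
/-- The set of non-cut edges. -/
def F0 (G : MDigraph) : Set G.E := {e | ¬ (top G).IsCutEdge e}

lemma xor_inl {a b : Prop} (ha : a) (hb : ¬ b) : Xor' a b := Or.inl ⟨ha, hb⟩
lemma xor_inr {a b : Prop} (ha : ¬ a) (hb : b) : Xor' a b := Or.inr ⟨hb, ha⟩

lemma F0_subset_del {c : G.E} (hcut : (top G).IsCutEdge c) : F0 G ⊆ Set.univ \ {c} :=
  fun e he => ⟨Set.mem_univ e, fun h => he (by rw [Set.mem_singleton_iff] at h; rw [h]; exact hcut)⟩

lemma conn_lift {W : Set G.V} {F R : Set G.E}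
    (hcl : ∀ ⦃x y : G.V⦄, G.Conn F x y → x ∈ W → y ∈ W)
    {u v : G.V} (hu : u ∈ W) (h : G.Conn (F \ R) u v) :
    G.Conn ({e | G.src e ∈ W ∧ G.tgt e ∈ W} \ R) u v := by
  revert hu
  induction h using Relation.ReflTransGen.head_induction_on with
  | refl => intro _; exact Relation.ReflTransGen.refl
  | @head x c hstep _ ih =>
      intro hx
      obtain ⟨e, ⟨heF, heR⟩, hd⟩ := hstep
      have hstep' : G.Conn F x c := Relation.ReflTransGen.single ⟨e, heF, hd⟩
      have hcW : c ∈ W := hcl hstep' hx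
      have heW : G.src e ∈ W ∧ G.tgt e ∈ W := by
        rcases hd with ⟨h1, h2⟩ | ⟨h1, h2⟩
        · exact ⟨by rw [h1]; exact hx, by rw [h2]; exact hcW⟩
        · exact ⟨by rw [h1]; exact hcW, by rw [h2]; exact hx⟩
      exact Relation.ReflTransGen.head ⟨e, ⟨heW, heR⟩, hd⟩ (ih hcW)

lemma blob_verts_eq (hc : ∀ u v : G.V, G.Conn Set.univ u v)
    {B : Subgraph G} (hB : IsBlobIn (top G) B) {w : G.V} (hw : w ∈ B.verts) :
    B.verts = {v | G.Conn (F0 G) v w} := by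
  classical
  obtain ⟨hle, hconn, hnocut, hmax⟩ := hB
  have hBF0 : B.edges ⊆ F0 G := by
    intro g hg hcut
    have hdel : G.Conn (B.edges \ {g}) (G.src g) (G.tgt g) :=
      Subgraph.conn_del_of_not_isCutEdge B hconn hg (hnocut g)
        (B.src_mem g hg) (B.tgt_mem g hg)
    exact (cut_top_iff hc).mp hcut
      (conn_mono (Set.diff_subset_diff_left (Set.subset_univ _)) hdel)
  set W : Set G.V := {v | G.Conn (F0 G) v w} with hWdef
  have hWcl : ∀ ⦃x y : G.V⦄, G.Conn (F0 G) x y → x ∈ W → y ∈ W :=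
    fun x y hxy hx => (conn_symm hxy).trans hx
  have hBW : B.verts ⊆ W := fun v hv => conn_mono hBF0 (hconn.2 v hv w hw)
  set Bplus : Subgraph G :=
    ⟨W, {e | G.src e ∈ W ∧ G.tgt e ∈ W}, fun e he => he.1, fun e he => he.2⟩ with hBplus
  have hEWF0 : Bplus.edges ⊆ F0 G := by
    intro e he hcut
    have h1 : G.Conn (Set.univ \ {e}) (G.src e) w :=
      conn_mono (F0_subset_del hcut) he.1
    have h2 : G.Conn (Set.univ \ {e}) (G.tgt e) w :=
      conn_mono (F0_subset_del hcut) he.2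
    exact (cut_top_iff hc).mp hcut (h1.trans (conn_symm h2))
  have hwW : w ∈ W := Relation.ReflTransGen.refl
  have hlift : ∀ (R : Set G.E) (u : G.V), u ∈ W → ∀ v : G.V,
      G.Conn (F0 G \ R) u v → G.Conn (Bplus.edges \ R) u v :=
    fun R u hu v h => conn_lift hWcl hu h
  have hBplusConn : Bplus.IsConnected := by
    refine ⟨⟨w, hwW⟩, fun u hu v hv => ?_⟩
    have h1 : G.Conn (Bplus.edges \ (∅ : Set G.E)) u w :=
      hlift ∅ u hu w (by rw [Set.diff_empty]; exact hu)
    have h2 : G.Conn (Bplus.edges \ (∅ : Set G.E)) v w :=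
      hlift ∅ v hv w (by rw [Set.diff_empty]; exact hv)
    rw [Set.diff_empty] at h1 h2
    exact h1.trans (conn_symm h2)
  have hBplusNoCut : ∀ g, ¬ Bplus.IsCutEdge g := by
    intro g
    by_cases hg : g ∈ Bplus.edges
    · have hgF0 : g ∈ F0 G := hEWF0 hg
      have hgdet : G.Conn (Set.univ \ {g}) (G.src g) (G.tgt g) := by
        by_contra hh
        exact hgF0 ((cut_top_iff hc).mpr hh)
      set R : Finset G.E := (Set.toFinite {c | (top G).IsCutEdge c}).toFinset with hR
      have hmemR : ∀ c, c ∈ R ↔ (top G).IsCutEdge c := by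
        intro c; rw [hR, Set.Finite.mem_toFinset]; exact Iff.rfl
      have hdet : G.Conn (F0 G \ {g}) (G.src g) (G.tgt g) := by
        have h1 : G.Conn ((Set.univ \ {g}) \ ↑R) (G.src g) (G.tgt g) := by
          refine conn_diff_finset R ?_ ?_ hgdet
          · intro c hcR
            exact (cut_top_iff hc).mp ((hmemR c).mp hcR)
          · intro c hcR
            have hccut := (hmemR c).mp hcR
            have h1 : G.Conn (Set.univ \ {c}) (G.src g) w :=
              conn_mono (F0_subset_del hccut) hg.1
            have h2 : G.Conn (Set.univ \ {c}) (G.tgt g) w :=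
              conn_mono (F0_subset_del hccut) hg.2
            exact h1.trans (conn_symm h2)
        have hseteq : (Set.univ \ {g}) \ ↑R = F0 G \ {g} := by
          ext e
          simp only [Set.mem_diff, Set.mem_univ, true_and, Finset.mem_coe,
            Set.mem_singleton_iff]
          rw [hmemR e]
          constructor
          · rintro ⟨hne, hnc⟩; exact ⟨hnc, hne⟩
          · rintro ⟨hnc, hne⟩; exact ⟨hne, hnc⟩
        rwa [hseteq] at h1
      apply Subgraph.not_isCutEdge_of _ ⟨w, hwW⟩
      intro u hu v hv
      have h1 : G.Conn (F0 G \ {g}) u w := conn_del_of_detour hdet hu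
      have h2 : G.Conn (F0 G \ {g}) v w := conn_del_of_detour hdet hv
      exact (hlift {g} u hu w h1).trans (conn_symm (hlift {g} v hv w h2))
    · exact fun hcutg => hg hcutg.1
  have hmaxapp := hmax Bplus ⟨Set.subset_univ _, Set.subset_univ _⟩ hBplusConn hBplusNoCut
    ⟨hBW, fun e he => ⟨hBW (B.src_mem e he), hBW (B.tgt_mem e he)⟩⟩
  exact Set.Subset.antisymm hBW hmaxapp.1

lemma blob_eq_of_common (hc : ∀ u v : G.V, G.Conn Set.univ u v)
    {B B' : Subgraph G} (hB : IsBlobIn (top G) B) (hB' : IsBlobIn (top G) B')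
    {v : G.V} (hvB : v ∈ B.verts) (hvB' : v ∈ B'.verts) : B.verts = B'.verts := by
  rw [blob_verts_eq hc hB hvB, blob_verts_eq hc hB' hvB']

/-- The non-incident-cut edges of a blob. -/
def FB (B : Subgraph G) : Set G.E := {e | ¬ IncidentCut (top G) B e}

lemma sep_eq_FB (B : Subgraph G) :
    {e ∈ (top G).edges | ¬ IncidentCut (top G) B e} = FB B := by
  ext e; simp only [FB, Set.mem_setOf_eq, Set.mem_sep_iff]
  exact ⟨fun h => h.2, fun h => ⟨Set.mem_univ e, h⟩⟩

lemma FB_congr {B B' : Subgraph G} (h : B.verts = B'.verts) : FB B = FB B' := by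
  unfold FB IncidentCut
  rw [h]

lemma B_edges_subset_FB (B : Subgraph G) : B.edges ⊆ FB B := by
  intro e he
  rintro ⟨hcut, hxor⟩
  rcases hxor with ⟨h1, h2⟩ | ⟨h1, h2⟩
  · exact h2 (B.tgt_mem e he)
  · exact h2 (B.src_mem e he)

lemma F0_subset_FB (B : Subgraph G) : F0 G ⊆ FB B := fun e he => fun hi => he hi.1

lemma mem_blob_of_connFB (hc : ∀ u v : G.V, G.Conn Set.univ u v)
    {B : Subgraph G} (hB : IsBlobIn (top G) B) {w : G.V} (hw : w ∈ B.verts)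
    {v : G.V} (h : G.Conn (FB B) w v) : v ∈ B.verts := by
  revert hw
  induction h using Relation.ReflTransGen.head_induction_on with
  | refl => intro h; exact h
  | @head x c hstep _ ih =>
      intro hx
      apply ih
      obtain ⟨e, he, hd⟩ := hstep
      by_cases hcut : (top G).IsCutEdge e
      · have hnx : ¬ Xor' (G.src e ∈ B.verts) (G.tgt e ∈ B.verts) :=
          fun hx' => he ⟨hcut, hx'⟩
        rcases hd with ⟨h1, h2⟩ | ⟨h1, h2⟩
        · by_contra hcB
          exact hnx (xor_inl (by rw [h1]; exact hx) (by rw [h2]; exact hcB))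
        · by_contra hcB
          exact hnx (xor_inr (by rw [h1]; exact hcB) (by rw [h2]; exact hx))
      · have hstep0 : G.Conn (F0 G) x c := Relation.ReflTransGen.single ⟨e, hcut, hd⟩
        have hxm : x ∈ {v | G.Conn (F0 G) v x} := Relation.ReflTransGen.refl
        have hxB := blob_verts_eq hc hB hx
        rw [blob_verts_eq hc hB hx]
        exact conn_symm hstep0

lemma leaving_edge_cut (hc : ∀ u v : G.V, G.Conn Set.univ u v)
    {B : Subgraph G} (hB : IsBlobIn (top G) B) {e : G.E}
    (hxor : Xor' (G.src e ∈ B.verts) (G.tgt e ∈ B.verts)) : (top G).IsCutEdge e := by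
  by_contra hnc
  rcases hxor with ⟨h1, h2⟩ | ⟨h1, h2⟩
  · apply h2
    rw [blob_verts_eq hc hB h1]
    exact Relation.ReflTransGen.single ⟨e, hnc, Or.inr ⟨rfl, rfl⟩⟩
  · apply h2
    rw [blob_verts_eq hc hB h1]
    exact Relation.ReflTransGen.single ⟨e, hnc, Or.inl ⟨rfl, rfl⟩⟩
lemma splice {D : Set G.V} {B : Subgraph G} (hBconn : B.IsConnected)
    (hdisj : ∀ x ∈ B.verts, x ∉ D)
    (hbound : ∀ e : G.E, G.src e ∈ D → G.tgt e ∉ D → G.tgt e ∈ B.verts)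
    (hbound' : ∀ e : G.E, G.tgt e ∈ D → G.src e ∉ D → G.src e ∈ B.verts)
    {u v : G.V} (h : G.Conn Set.univ u v) (hv : v ∉ D) :
    (u ∉ D → G.Conn {e | G.src e ∉ D ∧ G.tgt e ∉ D} u v) ∧
    (u ∈ D → ∃ z ∈ B.verts, G.Conn {e | G.src e ∉ D ∧ G.tgt e ∉ D} z v) := by
  have hBF : B.edges ⊆ {e | G.src e ∉ D ∧ G.tgt e ∉ D} := fun e he =>
    ⟨hdisj _ (B.src_mem e he), hdisj _ (B.tgt_mem e he)⟩
  induction h using Relation.ReflTransGen.head_induction_on with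
  | refl => exact ⟨fun _ => Relation.ReflTransGen.refl, fun hu => absurd hu hv⟩
  | @head x c hstep _ ih =>
      obtain ⟨e, -, hd⟩ := hstep
      by_cases hxD : x ∈ D
      · refine ⟨fun hx => absurd hxD hx, fun _ => ?_⟩
        by_cases hcD : c ∈ D
        · exact ih.2 hcD
        · have hcB : c ∈ B.verts := by
            rcases hd with ⟨h1, h2⟩ | ⟨h1, h2⟩
            · have := hbound e (by rw [h1]; exact hxD) (by rw [h2]; exact hcD)
              rwa [h2] at this
            · have := hbound' e (by rw [h2]; exact hxD) (by rw [h1]; exact hcD)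
              rwa [h1] at this
          exact ⟨c, hcB, ih.1 hcD⟩
      · refine ⟨fun _ => ?_, fun hx => absurd hx hxD⟩
        by_cases hcD : c ∈ D
        · have hxB : x ∈ B.verts := by
            rcases hd with ⟨h1, h2⟩ | ⟨h1, h2⟩
            · have := hbound' e (by rw [h2]; exact hcD) (by rw [h1]; exact hxD)
              rwa [h1] at this
            · have := hbound e (by rw [h1]; exact hcD) (by rw [h2]; exact hxD)
              rwa [h2] at this
          obtain ⟨z, hz, hzv⟩ := ih.2 hcD
          exact (conn_mono hBF (hBconn.2 x hxB z hz)).trans hzv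
        · have heD : G.src e ∉ D ∧ G.tgt e ∉ D := by
            rcases hd with ⟨h1, h2⟩ | ⟨h1, h2⟩
            · exact ⟨by rw [h1]; exact hxD, by rw [h2]; exact hcD⟩
            · exact ⟨by rw [h1]; exact hcD, by rw [h2]; exact hxD⟩
          exact Relation.ReflTransGen.head ⟨e, heD, hd⟩ (ih.1 hcD)

lemma first_bad {F : Set G.E} {u v : G.V} (h : G.Conn Set.univ u v)
    (hnc : ¬ G.Conn F u v) :
    ∃ g, g ∉ F ∧ ∃ p, (p = G.src g ∨ p = G.tgt g) ∧ G.Conn F u p := by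
  have main : G.Conn F u v ∨
      ∃ g, g ∉ F ∧ ∃ p, (p = G.src g ∨ p = G.tgt g) ∧ G.Conn F u p := by
    clear hnc
    induction h using Relation.ReflTransGen.head_induction_on with
    | refl => exact Or.inl Relation.ReflTransGen.refl
    | @head x c hstep _ ih =>
        by_cases heF : ∃ e ∈ F, (G.src e = x ∧ G.tgt e = c) ∨ (G.src e = c ∧ G.tgt e = x)
        · obtain ⟨e, heF', hd⟩ := heF
          rcases ih with h0 | ⟨g, hg, p, hp, hcp⟩
          · exact Or.inl (Relation.ReflTransGen.head ⟨e, heF', hd⟩ h0)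
          · exact Or.inr ⟨g, hg, p, hp, Relation.ReflTransGen.head ⟨e, heF', hd⟩ hcp⟩
        · obtain ⟨e, -, hd⟩ := hstep
          have heF' : e ∉ F := fun hh => heF ⟨e, hh, hd⟩
          refine Or.inr ⟨e, heF', x, ?_, Relation.ReflTransGen.refl⟩
          rcases hd with ⟨h1, h2⟩ | ⟨h1, h2⟩
          · exact Or.inl h1.symm
          · exact Or.inr h2.symm
  rcases main with h0 | h1
  · exact absurd h0 hnc
  · exact h1

lemma blob_det_unique (hc : ∀ u v : G.V, G.Conn Set.univ u v)
    {B B' : Subgraph G} (hB : IsBlobIn (top G) B) (hB' : IsBlobIn (top G) B')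
    {x1 x2 x3 : G.V}
    (h12 : ¬ G.Conn (FB B) x1 x2) (h13 : ¬ G.Conn (FB B) x1 x3)
    (h23 : ¬ G.Conn (FB B) x2 x3)
    (h12' : ¬ G.Conn (FB B') x1 x2) (h13' : ¬ G.Conn (FB B') x1 x3)
    (h23' : ¬ G.Conn (FB B') x2 x3) :
    B.verts = B'.verts := by
  by_cases hcom : ∃ v, v ∈ B.verts ∧ v ∈ B'.verts
  · obtain ⟨v, h1, h2⟩ := hcom
    exact blob_eq_of_common hc hB hB' h1 h2
  push_neg at hcom
  exfalso
  obtain ⟨w', hw'⟩ := hB'.2.1.1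
  set D : Set G.V := {z | G.Conn (FB B) z w'} with hD
  have hdisjBB' : ∀ z ∈ B'.verts, z ∉ B.verts := fun z hz hz' => hcom z hz' hz
  have hB'FB : B'.edges ⊆ FB B := by
    intro e he hi
    rcases hi.2 with ⟨hs, ht⟩ | ⟨hs, ht⟩
    · exact hdisjBB' _ (B'.src_mem e he) hs
    · exact hdisjBB' _ (B'.tgt_mem e he) hs
  have hB'D : ∀ z ∈ B'.verts, z ∈ D := fun z hz =>
    conn_mono hB'FB (hB'.2.1.2 z hz w' hw')
  have hDB : ∀ z ∈ B.verts, z ∉ D := by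
    intro z hz hzD
    have : w' ∈ B.verts := mem_blob_of_connFB hc hB hz hzD
    exact hdisjBB' w' hw' this
  have hDcl : ∀ ⦃p q : G.V⦄, G.Conn (FB B) p q → p ∈ D → q ∈ D :=
    fun p q hpq hp => (conn_symm hpq).trans hp
  have hbound : ∀ e : G.E, G.src e ∈ D → G.tgt e ∉ D → G.tgt e ∈ B.verts := by
    intro e hs ht
    by_cases hFBe : e ∈ FB B
    · exact absurd (hDcl (Relation.ReflTransGen.single ⟨e, hFBe, Or.inl ⟨rfl, rfl⟩⟩) hs) ht
    · have hi : IncidentCut (top G) B e := not_not.mp hFBe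
      rcases hi.2 with ⟨h1, h2⟩ | ⟨h1, h2⟩
      · exact absurd hs (hDB _ h1)
      · exact h1
  have hbound' : ∀ e : G.E, G.tgt e ∈ D → G.src e ∉ D → G.src e ∈ B.verts := by
    intro e ht hs
    by_cases hFBe : e ∈ FB B
    · exact absurd (hDcl (Relation.ReflTransGen.single ⟨e, hFBe, Or.inr ⟨rfl, rfl⟩⟩) ht) hs
    · have hi : IncidentCut (top G) B e := not_not.mp hFBe
      rcases hi.2 with ⟨h1, h2⟩ | ⟨h1, h2⟩
      · exact h1
      · exact absurd ht (hDB _ h1)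
  have hFD_FB' : {e : G.E | G.src e ∉ D ∧ G.tgt e ∉ D} ⊆ FB B' := by
    intro e he hi
    rcases hi.2 with ⟨h1, h2⟩ | ⟨h1, h2⟩
    · exact he.1 (hB'D _ h1)
    · exact he.2 (hB'D _ h1)
  have key : ∀ p q : G.V, p ∉ D → q ∉ D → ¬ G.Conn (FB B') p q → False := by
    intro p q hp hq hnc
    exact hnc (conn_mono hFD_FB'
      ((splice hB.2.1 hDB hbound hbound' (hc p q) hq).1 hp))
  by_cases h1D : x1 ∈ D
  · have h2D : x2 ∉ D := fun hh => h12 (h1D.trans (conn_symm hh))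
    have h3D : x3 ∉ D := fun hh => h13 (h1D.trans (conn_symm hh))
    exact key x2 x3 h2D h3D h23'
  · by_cases h2D : x2 ∈ D
    · have h3D : x3 ∉ D := fun hh => h23 (h2D.trans (conn_symm hh))
      exact key x1 x3 h1D h3D h13'
    · exact key x1 x2 h1D h2D h12'
lemma comp_avoid (hc : ∀ u v : G.V, G.Conn Set.univ u v)
    {B : Subgraph G} (hB : IsBlobIn (top G) B) {r : G.V} (hr : r ∉ B.verts)
    {u v : G.V} (hu : ¬ G.Conn (FB B) u r) (hv : ¬ G.Conn (FB B) v r) :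
    G.Conn {e | ¬ G.Conn (FB B) (G.src e) r ∧ ¬ G.Conn (FB B) (G.tgt e) r} u v := by
  have hDB : ∀ z ∈ B.verts, z ∉ {z | G.Conn (FB B) z r} := fun z hz hzD =>
    hr (mem_blob_of_connFB hc hB hz hzD)
  have hDcl : ∀ ⦃p q : G.V⦄, G.Conn (FB B) p q →
      p ∈ {z | G.Conn (FB B) z r} → q ∈ {z | G.Conn (FB B) z r} :=
    fun p q hpq hp => (conn_symm hpq).trans hp
  have hbound : ∀ e : G.E, G.src e ∈ {z | G.Conn (FB B) z r} →
      G.tgt e ∉ {z | G.Conn (FB B) z r} → G.tgt e ∈ B.verts := by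
    intro e hs ht
    by_cases hFBe : e ∈ FB B
    · exact absurd (hDcl (Relation.ReflTransGen.single ⟨e, hFBe, Or.inl ⟨rfl, rfl⟩⟩) hs) ht
    · have hi : IncidentCut (top G) B e := not_not.mp hFBe
      rcases hi.2 with ⟨h1, h2⟩ | ⟨h1, h2⟩
      · exact absurd hs (hDB _ h1)
      · exact h1
  have hbound' : ∀ e : G.E, G.tgt e ∈ {z | G.Conn (FB B) z r} →
      G.src e ∉ {z | G.Conn (FB B) z r} → G.src e ∈ B.verts := by
    intro e ht hs
    by_cases hFBe : e ∈ FB B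
    · exact absurd (hDcl (Relation.ReflTransGen.single ⟨e, hFBe, Or.inr ⟨rfl, rfl⟩⟩) ht) hs
    · have hi : IncidentCut (top G) B e := not_not.mp hFBe
      rcases hi.2 with ⟨h1, h2⟩ | ⟨h1, h2⟩
      · exact h1
      · exact absurd ht (hDB _ h1)
  exact (splice hB.2.1 hDB hbound hbound' (hc u v) hv).1 hu
end MDigraph
open MDigraph in
/-- A rooted binary phylogenetic network on the taxon set `X`: a connected
directed acyclic graph whose node set consists of a root (in-degree 0,
out-degree 2), leaves (in-degree 1, out-degree 0) bijectively labelled by `X`,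
tree nodes (in-degree 1, out-degree 2) and hybrid nodes (in-degree 2,
out-degree 1). -/
structure PhyloNetwork (X : Type) extends MDigraph where
  root : toMDigraph.V
  leaf : X → toMDigraph.V
  leaf_inj : Function.Injective leaf
  root_in : toMDigraph.inDeg root = 0
  root_out : toMDigraph.outDeg root = 2
  leaf_in : ∀ x, toMDigraph.inDeg (leaf x) = 1
  leaf_out : ∀ x, toMDigraph.outDeg (leaf x) = 0
  internal : ∀ v, v ≠ root → (∀ x, v ≠ leaf x) →
      (toMDigraph.inDeg v = 1 ∧ toMDigraph.outDeg v = 2) ∨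
      (toMDigraph.inDeg v = 2 ∧ toMDigraph.outDeg v = 1)
  acyclic : ∀ v, ¬ Relation.TransGen (toMDigraph.DStep Set.univ) v v
  conn : ∀ u v, toMDigraph.Conn Set.univ u v

namespace PhyloNetwork

open MDigraph

variable {X : Type} (N : PhyloNetwork X)

/-- The subnetwork of `N⁺` consisting of all nodes and edges ancestral to at
least one taxon in `Y`.  Since suppressing nodes of in- and out-degree 1
affects neither blobs, nor cut edges, nor which sets of taxa they separate,
this subnetwork faithfully represents the induced network `N⁺_Y`. -/
def inducedSub (Y : Set X) : Subgraph N.toMDigraph where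
  verts := {v | ∃ y ∈ Y, N.toMDigraph.Above v (N.leaf y)}
  edges := {e | ∃ y ∈ Y, N.toMDigraph.Above (N.toMDigraph.tgt e) (N.leaf y)}
  src_mem := by
    rintro e ⟨y, hy, h⟩
    exact ⟨y, hy, Relation.ReflTransGen.head ⟨e, Set.mem_univ e, rfl, rfl⟩ h⟩
  tgt_mem := by
    rintro e ⟨y, hy, h⟩
    exact ⟨y, hy, h⟩

/-- `v` is a stable ancestor of the leaves: it is ancestral to every leaf and
lies on every directed path from the root to any leaf. -/
def IsStableAncestor (v : N.toMDigraph.V) : Prop :=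
  (∀ x, N.toMDigraph.Above v (N.leaf x)) ∧
  ∀ x, N.toMDigraph.OnEveryPath v N.root (N.leaf x)

/-- `v` is the lowest stable ancestor (LSA) of the network: a stable ancestor
below all stable ancestors. -/
def IsLSA (v : N.toMDigraph.V) : Prop :=
  N.IsStableAncestor v ∧ ∀ u, N.IsStableAncestor u → N.toMDigraph.Above u v

/-- The number of cut edges of `N⁺` incident to the blob `B`. -/
noncomputable def blobDeg (B : Subgraph N.toMDigraph) : ℕ :=
  Nat.card {e : N.toMDigraph.E // IncidentCut (top N.toMDigraph) B e}

/-- `B` is an `m`-blob of the rooted network `N⁺`: if the root is not in `B`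
then `B` has exactly `m` incident cut edges, while if the root is in `B` then
`B` has exactly `m - 1` incident cut edges. -/
def IsMBlob (B : Subgraph N.toMDigraph) (m : ℕ) : Prop :=
  IsBlobIn (top N.toMDigraph) B ∧
    ((N.root ∈ B.verts ∧ m = N.blobDeg B + 1) ∨ (N.root ∉ B.verts ∧ m = N.blobDeg B))

end PhyloNetwork

open MDigraph

namespace PhyloNetwork

open MDigraph

variable {X : Type} (N : PhyloNetwork X)

lemma leaf_no_src (y : X) (e : N.toMDigraph.E) : N.toMDigraph.src e ≠ N.leaf y := by
  intro h
  have h0 : N.toMDigraph.outDeg (N.leaf y) = 0 := N.leaf_out y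
  rw [MDigraph.outDeg] at h0
  have hie : IsEmpty {e' : N.toMDigraph.E // N.toMDigraph.src e' = N.leaf y} := by
    rcases Nat.card_eq_zero.mp h0 with h' | h'
    · exact h'
    · exact absurd h' (not_infinite_iff_finite.mpr (by infer_instance))
  exact hie.false ⟨e, h⟩

lemma leaf_tgt_unique (y : X) {e e' : N.toMDigraph.E}
    (he : N.toMDigraph.tgt e = N.leaf y) (he' : N.toMDigraph.tgt e' = N.leaf y) :
    e = e' := by
  have h1 : N.toMDigraph.inDeg (N.leaf y) = 1 := N.leaf_in y
  rw [MDigraph.inDeg] at h1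
  have hs : Subsingleton {e'' : N.toMDigraph.E // N.toMDigraph.tgt e'' = N.leaf y} :=
    Finite.card_le_one_iff_subsingleton.mp (by omega)
  have := @Subsingleton.elim _ hs ⟨e, he⟩ ⟨e', he'⟩
  exact congrArg Subtype.val this

lemma leaf_pendant (y : X) : ∃ e, N.toMDigraph.tgt e = N.leaf y := by
  have h1 : N.toMDigraph.inDeg (N.leaf y) = 1 := N.leaf_in y
  rw [MDigraph.inDeg] at h1
  have hne : Nonempty {e : N.toMDigraph.E // N.toMDigraph.tgt e = N.leaf y} :=
    (Nat.card_pos_iff.mp (by omega)).1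
  obtain ⟨⟨e, he⟩⟩ := hne
  exact ⟨e, he⟩

lemma conn_from_leaf (y : X) {F : Set N.toMDigraph.E} {f : N.toMDigraph.E}
    (hf : N.toMDigraph.tgt f = N.leaf y) (hfF : f ∉ F) {z : N.toMDigraph.V}
    (h : N.toMDigraph.Conn F (N.leaf y) z) : z = N.leaf y := by
  rcases Relation.ReflTransGen.cases_head h with heq | ⟨c, ⟨e, heF, hd⟩, -⟩
  · exact heq.symm
  · exfalso
    rcases hd with ⟨h1, h2⟩ | ⟨h1, h2⟩
    · exact N.leaf_no_src y e h1
    · exact hfF ((N.leaf_tgt_unique y h2 hf) ▸ heF)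

lemma leaf_notin_blob {B : Subgraph N.toMDigraph}
    (hB : IsBlobIn (top N.toMDigraph) B)
    {b c d : X} (hbc : b ≠ c) (hbd : b ≠ d) (hcd : c ≠ d)
    (hdbc : ¬ N.toMDigraph.Conn (FB B) (N.leaf b) (N.leaf c))
    (hdbd : ¬ N.toMDigraph.Conn (FB B) (N.leaf b) (N.leaf d))
    (hdcd : ¬ N.toMDigraph.Conn (FB B) (N.leaf c) (N.leaf d)) :
    ∀ y, N.leaf y ∉ B.verts := by
  have hc := N.conn
  intro y hy
  obtain ⟨f, hf⟩ := N.leaf_pendant y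
  by_cases htriv : ∃ u ∈ B.verts, u ≠ N.leaf y
  · obtain ⟨u, hu, hne⟩ := htriv
    have hconn := hB.2.1.2 _ hy u hu
    rcases Relation.ReflTransGen.cases_head hconn with heq | ⟨c', ⟨g, hg, hd⟩, -⟩
    · exact hne heq.symm
    · have hfB : f ∈ B.edges := by
        rcases hd with ⟨h1, h2⟩ | ⟨h1, h2⟩
        · exact absurd h1 (N.leaf_no_src y g)
        · exact (N.leaf_tgt_unique y h2 hf) ▸ hg
      have hcut : B.IsCutEdge f := by
        apply Subgraph.isCutEdge_of B hB.2.1 hfB hy hu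
        intro hcn
        exact hne (N.conn_from_leaf y hf (fun hh => hh.2 rfl) hcn)
      exact hB.2.2.1 f hcut
  · push_neg at htriv
    have hFB : Set.univ \ {f} ⊆ FB B := by
      intro g hg hi
      rcases hi.2 with ⟨h1, h2⟩ | ⟨h1, h2⟩
      · exact N.leaf_no_src y g (htriv _ h1)
      · exact hg.2 (N.leaf_tgt_unique y (htriv _ h1) hf)
    have key : ∀ p q : X, p ≠ q → p ≠ y → q ≠ y →
        ¬ N.toMDigraph.Conn (FB B) (N.leaf p) (N.leaf q) → False := by
      intro p q hpq hpy hqy hncFB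
      have hpq' : N.toMDigraph.Conn (Set.univ \ {f}) (N.leaf p) (N.leaf q) := by
        by_cases hfcut : (top N.toMDigraph).IsCutEdge f
        · have hcut' : ¬ N.toMDigraph.Conn (Set.univ \ {f})
              (N.toMDigraph.src f) (N.toMDigraph.tgt f) := (cut_top_iff hc).mp hfcut
          rcases cross hcut' (hc (N.leaf p) (N.leaf q)) with h0 | ⟨h2a, h2b⟩ | ⟨h3a, h3b⟩
          · exact h0
          · exfalso
            rw [hf] at h2b
            have := N.conn_from_leaf y hf (fun hh => hh.2 rfl) h2b
            exact hqy (N.leaf_inj this)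
          · exfalso
            have h3a' := conn_symm h3a
            rw [hf] at h3a'
            have := N.conn_from_leaf y hf (fun hh => hh.2 rfl) h3a'
            exact hpy (N.leaf_inj this)
        · have hdet : N.toMDigraph.Conn (Set.univ \ {f})
              (N.toMDigraph.src f) (N.toMDigraph.tgt f) := by
            by_contra hh
            exact hfcut ((cut_top_iff hc).mpr hh)
          exact conn_del_of_detour (by simpa using hdet) (hc (N.leaf p) (N.leaf q))
      exact hncFB (conn_mono hFB hpq')
    by_cases hby : b = y
    · subst hby
      exact key c d hcd (fun h => hbc h.symm) (fun h => hbd h.symm) hdcd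
    · by_cases hcy : c = y
      · subst hcy
        exact key b d hbd hby (fun h => hcd h.symm) hdbd
      · exact key b c hbc hby hcy hdbc

end PhyloNetwork

/-- Let `N⁺` be a rooted binary phylogenetic network on `n ≥ 5` taxa, and suppose
`{a,b,c,d}` and `{b,c,d,e}` are B-quartets on `N⁺`.  Then either the
5-element set `{a,b,c,d,e}` determines the blob of `N⁺` determined by
`{b,c,d}` (so in particular that blob is an `m`-blob with `m ≥ 5`), or there
is a cut edge of `N⁺` whose deletion leaves `a` and `e` in one connected
component and `b`, `c`, `d` in the other. -/
theorem stmt_15 {X : Type} (N : PhyloNetwork X) (hn : 5 ≤ Nat.card X)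
    (a b c d e : X) (hpair : List.Pairwise (· ≠ ·) [a, b, c, d, e])
    (h1 : BQuartetIn (top N.toMDigraph) N.leaf a b c d)
    (h2 : BQuartetIn (top N.toMDigraph) N.leaf b c d e) :
    (∀ B : Subgraph N.toMDigraph, IsBlobIn (top N.toMDigraph) B →
        DeterminesIn (top N.toMDigraph) B N.leaf ({b, c, d} : Set X) →
        DeterminesIn (top N.toMDigraph) B N.leaf ({a, b, c, d, e} : Set X) ∧
        ∃ m, N.IsMBlob B m ∧ 5 ≤ m) ∨
    (∃ e₀, (top N.toMDigraph).IsCutEdge e₀ ∧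
        N.toMDigraph.Conn (Set.univ \ {e₀}) (N.leaf a) (N.leaf e) ∧
        N.toMDigraph.Conn (Set.univ \ {e₀}) (N.leaf b) (N.leaf c) ∧
        N.toMDigraph.Conn (Set.univ \ {e₀}) (N.leaf b) (N.leaf d) ∧
        ¬ N.toMDigraph.Conn (Set.univ \ {e₀}) (N.leaf a) (N.leaf b)) := by
  classical
  have hc := N.conn
  have hab : a ≠ b := List.rel_of_pairwise_cons hpair (by simp)
  have hac : a ≠ c := List.rel_of_pairwise_cons hpair (by simp)
  have had : a ≠ d := List.rel_of_pairwise_cons hpair (by simp)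
  have haeX : a ≠ e := List.rel_of_pairwise_cons hpair (by simp)
  have hp2 := List.Pairwise.of_cons hpair
  have hbc : b ≠ c := List.rel_of_pairwise_cons hp2 (by simp)
  have hbd : b ≠ d := List.rel_of_pairwise_cons hp2 (by simp)
  have hbe : b ≠ e := List.rel_of_pairwise_cons hp2 (by simp)
  have hp3 := List.Pairwise.of_cons hp2
  have hcd : c ≠ d := List.rel_of_pairwise_cons hp3 (by simp)
  have hce : c ≠ e := List.rel_of_pairwise_cons hp3 (by simp)
  have hde : d ≠ e := List.rel_of_pairwise_cons (List.Pairwise.of_cons hp3) (by simp)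
  obtain ⟨B1, hB1blob, hB1det⟩ := h1
  obtain ⟨B2, hB2blob, hB2det⟩ := h2
  have hd1 : ∀ p ∈ ({a, b, c, d} : Set X), ∀ q ∈ ({a, b, c, d} : Set X), p ≠ q →
      ¬ N.toMDigraph.Conn (FB B1) (N.leaf p) (N.leaf q) := by
    intro p hp q hq hpq
    have := hB1det p hp q hq hpq
    rwa [sep_eq_FB] at this
  have hd2 : ∀ p ∈ ({b, c, d, e} : Set X), ∀ q ∈ ({b, c, d, e} : Set X), p ≠ q →
      ¬ N.toMDigraph.Conn (FB B2) (N.leaf p) (N.leaf q) := by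
    intro p hp q hq hpq
    have := hB2det p hp q hq hpq
    rwa [sep_eq_FB] at this
  by_cases hsame : N.toMDigraph.Conn (FB B1) (N.leaf a) (N.leaf e)
  · right
    have hnotin : ∀ y, N.leaf y ∉ B1.verts :=
      N.leaf_notin_blob hB1blob hbc hbd hcd
        (hd1 b (by simp) c (by simp) hbc) (hd1 b (by simp) d (by simp) hbd)
        (hd1 c (by simp) d (by simp) hcd)
    obtain ⟨w₀, hw₀⟩ := hB1blob.2.1.1
    have hnc : ¬ N.toMDigraph.Conn (FB B1) (N.leaf a) w₀ := fun h =>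
      hnotin a (mem_blob_of_connFB hc hB1blob hw₀ (conn_symm h))
    obtain ⟨g, hgF, p, hp, hcp⟩ := first_bad (hc _ _) hnc
    have hinc : IncidentCut (top N.toMDigraph) B1 g := not_not.mp hgF
    have hFBg : FB B1 ⊆ Set.univ \ {g} := by
      intro x hx
      refine ⟨Set.mem_univ x, fun hh => ?_⟩
      rw [Set.mem_singleton_iff] at hh
      subst hh
      exact hgF hx
    have hpB : p ∉ B1.verts := fun hh =>
      hnotin a (mem_blob_of_connFB hc hB1blob hh (conn_symm hcp))
    obtain ⟨q, hqB, hpq_eq⟩ : ∃ q, q ∈ B1.verts ∧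
        ((N.toMDigraph.src g = q ∧ N.toMDigraph.tgt g = p) ∨
         (N.toMDigraph.src g = p ∧ N.toMDigraph.tgt g = q)) := by
      rcases hinc.2 with ⟨hsB, htB⟩ | ⟨htB, hsB⟩
      · rcases hp with hp' | hp'
        · exact absurd (by rw [hp']; exact hsB) hpB
        · exact ⟨N.toMDigraph.src g, hsB, Or.inl ⟨rfl, hp'.symm⟩⟩
      · rcases hp with hp' | hp'
        · exact ⟨N.toMDigraph.tgt g, htB, Or.inr ⟨hp'.symm, rfl⟩⟩
        · exact absurd (by rw [hp']; exact htB) hpB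
    have havoid : ∀ u v : N.toMDigraph.V,
        ¬ N.toMDigraph.Conn (FB B1) u (N.leaf a) →
        ¬ N.toMDigraph.Conn (FB B1) v (N.leaf a) →
        N.toMDigraph.Conn (Set.univ \ {g}) u v := by
      intro u v hu hv
      have h0 := comp_avoid hc hB1blob (hnotin a) hu hv
      refine conn_mono ?_ h0
      intro x hx
      refine ⟨Set.mem_univ x, fun hh => ?_⟩
      rw [Set.mem_singleton_iff] at hh
      subst hh
      rcases hpq_eq with ⟨hh1, hh2⟩ | ⟨hh1, hh2⟩
      · exact hx.2 (by rw [hh2]; exact conn_symm hcp)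
      · exact hx.1 (by rw [hh1]; exact conn_symm hcp)
    have hqnotD : ¬ N.toMDigraph.Conn (FB B1) q (N.leaf a) := fun hh =>
      hnotin a (mem_blob_of_connFB hc hB1blob hqB hh)
    have hbD : ¬ N.toMDigraph.Conn (FB B1) (N.leaf b) (N.leaf a) :=
      hd1 b (by simp) a (by simp) (Ne.symm hab)
    have hcD : ¬ N.toMDigraph.Conn (FB B1) (N.leaf c) (N.leaf a) :=
      hd1 c (by simp) a (by simp) (Ne.symm hac)
    have hdD : ¬ N.toMDigraph.Conn (FB B1) (N.leaf d) (N.leaf a) :=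
      hd1 d (by simp) a (by simp) (Ne.symm had)
    refine ⟨g, hinc.1, conn_mono hFBg hsame, havoid _ _ hbD hcD, havoid _ _ hbD hdD, ?_⟩
    intro hconn_ab
    have hh1 : N.toMDigraph.Conn (Set.univ \ {g}) p (N.leaf a) :=
      conn_mono hFBg (conn_symm hcp)
    have hh2 : N.toMDigraph.Conn (Set.univ \ {g}) (N.leaf b) q := havoid _ _ hbD hqnotD
    have hh3 : N.toMDigraph.Conn (Set.univ \ {g}) p q := (hh1.trans hconn_ab).trans hh2
    have hst : ¬ N.toMDigraph.Conn (Set.univ \ {g})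
        (N.toMDigraph.src g) (N.toMDigraph.tgt g) := (cut_top_iff hc).mp hinc.1
    rcases hpq_eq with ⟨h4, h5⟩ | ⟨h4, h5⟩
    · exact hst (by rw [h4, h5]; exact conn_symm hh3)
    · exact hst (by rw [h4, h5]; exact hh3)
  · left
    intro B hBblob hBdet
    have hd0 : ∀ p ∈ ({b, c, d} : Set X), ∀ q ∈ ({b, c, d} : Set X), p ≠ q →
        ¬ N.toMDigraph.Conn (FB B) (N.leaf p) (N.leaf q) := by
      intro p hp q hq hpq
      have := hBdet p hp q hq hpq
      rwa [sep_eq_FB] at this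
    have hv1 : B.verts = B1.verts :=
      blob_det_unique hc hBblob hB1blob
        (hd0 b (by simp) c (by simp) hbc) (hd0 b (by simp) d (by simp) hbd)
        (hd0 c (by simp) d (by simp) hcd)
        (hd1 b (by simp) c (by simp) hbc) (hd1 b (by simp) d (by simp) hbd)
        (hd1 c (by simp) d (by simp) hcd)
    have hv2 : B.verts = B2.verts :=
      blob_det_unique hc hBblob hB2blob
        (hd0 b (by simp) c (by simp) hbc) (hd0 b (by simp) d (by simp) hbd)
        (hd0 c (by simp) d (by simp) hcd)
        (hd2 b (by simp) c (by simp) hbc) (hd2 b (by simp) d (by simp) hbd)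
        (hd2 c (by simp) d (by simp) hcd)
    have hFB1 : FB B = FB B1 := FB_congr hv1
    have hFB2 : FB B = FB B2 := FB_congr hv2
    have dA : ∀ p ∈ ({a, b, c, d} : Set X), ∀ q ∈ ({a, b, c, d} : Set X), p ≠ q →
        ¬ N.toMDigraph.Conn (FB B) (N.leaf p) (N.leaf q) := by
      intro p hp q hq hpq
      rw [hFB1]
      exact hd1 p hp q hq hpq
    have dE : ∀ p ∈ ({b, c, d, e} : Set X), ∀ q ∈ ({b, c, d, e} : Set X), p ≠ q →
        ¬ N.toMDigraph.Conn (FB B) (N.leaf p) (N.leaf q) := by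
      intro p hp q hq hpq
      rw [hFB2]
      exact hd2 p hp q hq hpq
    have hae' : ¬ N.toMDigraph.Conn (FB B) (N.leaf a) (N.leaf e) := by
      rw [hFB1]; exact hsame
    have symf : ∀ {u v : N.toMDigraph.V}, ¬ N.toMDigraph.Conn (FB B) u v →
        ¬ N.toMDigraph.Conn (FB B) v u := fun h hh => h (conn_symm hh)
    have Dab : ¬ N.toMDigraph.Conn (FB B) (N.leaf a) (N.leaf b) := dA a (by simp) b (by simp) hab
    have Dac : ¬ N.toMDigraph.Conn (FB B) (N.leaf a) (N.leaf c) := dA a (by simp) c (by simp) hac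
    have Dad : ¬ N.toMDigraph.Conn (FB B) (N.leaf a) (N.leaf d) := dA a (by simp) d (by simp) had
    have Dbc : ¬ N.toMDigraph.Conn (FB B) (N.leaf b) (N.leaf c) := dA b (by simp) c (by simp) hbc
    have Dbd : ¬ N.toMDigraph.Conn (FB B) (N.leaf b) (N.leaf d) := dA b (by simp) d (by simp) hbd
    have Dcd : ¬ N.toMDigraph.Conn (FB B) (N.leaf c) (N.leaf d) := dA c (by simp) d (by simp) hcd
    have Dbe : ¬ N.toMDigraph.Conn (FB B) (N.leaf b) (N.leaf e) := dE b (by simp) e (by simp) hbe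
    have Dce : ¬ N.toMDigraph.Conn (FB B) (N.leaf c) (N.leaf e) := dE c (by simp) e (by simp) hce
    have Dde : ¬ N.toMDigraph.Conn (FB B) (N.leaf d) (N.leaf e) := dE d (by simp) e (by simp) hde
    constructor
    · intro s hs t ht hst
      rw [sep_eq_FB]
      simp only [Set.mem_insert_iff, Set.mem_singleton_iff] at hs ht
      rcases hs with rfl | rfl | rfl | rfl | rfl <;> rcases ht with rfl | rfl | rfl | rfl | rfl <;>
        first
        | exact absurd rfl hst
        | exact hae'
        | exact symf hae'
        | exact Dab | exact symf Dab
        | exact Dac | exact symf Dac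
        | exact Dad | exact symf Dad
        | exact Dbc | exact symf Dbc
        | exact Dbd | exact symf Dbd
        | exact Dcd | exact symf Dcd
        | exact Dbe | exact symf Dbe
        | exact Dce | exact symf Dce
        | exact Dde | exact symf Dde
    · obtain ⟨w₀, hw₀⟩ := hBblob.2.1.1
      have hnotin : ∀ y, N.leaf y ∉ B.verts :=
        N.leaf_notin_blob hBblob hbc hbd hcd
          (hd0 b (by simp) c (by simp) hbc) (hd0 b (by simp) d (by simp) hbd)
          (hd0 c (by simp) d (by simp) hcd)
      have getedge : ∀ x : X, ∃ g, IncidentCut (top N.toMDigraph) B g ∧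
          ∃ p, (p = N.toMDigraph.src g ∨ p = N.toMDigraph.tgt g) ∧
            N.toMDigraph.Conn (FB B) (N.leaf x) p ∧ p ∉ B.verts := by
        intro x
        have hncx : ¬ N.toMDigraph.Conn (FB B) (N.leaf x) w₀ := fun h =>
          hnotin x (mem_blob_of_connFB hc hBblob hw₀ (conn_symm h))
        obtain ⟨g, hg, p, hp, hcp⟩ := first_bad (hc _ _) hncx
        exact ⟨g, not_not.mp hg, p, hp, hcp, fun hh =>
          hnotin x (mem_blob_of_connFB hc hBblob hh (conn_symm hcp))⟩
      obtain ⟨ga, hIa, pa, hEa, hCa, hBa⟩ := getedge a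
      obtain ⟨gb, hIb, pb, hEb, hCb, hBb⟩ := getedge b
      obtain ⟨gc, hIc, pc, hEc, hCc, hBc⟩ := getedge c
      obtain ⟨gd, hId, pd, hEd, hCd, hBd⟩ := getedge d
      obtain ⟨ge, hIe, pe, hEe, hCe, hBe⟩ := getedge e
      have hdist : ∀ (g₁ p₁ g₂ p₂ : N.toMDigraph.E → N.toMDigraph.E) , True := fun _ _ _ _ => trivial
      clear hdist
      have hdist : ∀ (g₁ : N.toMDigraph.E) (p₁ : N.toMDigraph.V)
          (g₂ : N.toMDigraph.E) (p₂ : N.toMDigraph.V) (x y : X),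
          IncidentCut (top N.toMDigraph) B g₁ →
          (p₁ = N.toMDigraph.src g₁ ∨ p₁ = N.toMDigraph.tgt g₁) →
          N.toMDigraph.Conn (FB B) (N.leaf x) p₁ → p₁ ∉ B.verts →
          IncidentCut (top N.toMDigraph) B g₂ →
          (p₂ = N.toMDigraph.src g₂ ∨ p₂ = N.toMDigraph.tgt g₂) →
          N.toMDigraph.Conn (FB B) (N.leaf y) p₂ → p₂ ∉ B.verts →
          ¬ N.toMDigraph.Conn (FB B) (N.leaf x) (N.leaf y) → g₁ ≠ g₂ := by
        intro g₁ p₁ g₂ p₂ x y hi1 hp1 hc1 hb1 hi2 hp2 hc2 hb2 hxy heq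
        subst heq
        have hpp : p₁ = p₂ := by
          rcases hi1.2 with ⟨hs, ht⟩ | ⟨ht, hs⟩
          · rcases hp1 with hh1 | hh1
            · exact absurd (by rw [hh1]; exact hs) hb1
            · rcases hp2 with hh2 | hh2
              · exact absurd (by rw [hh2]; exact hs) hb2
              · rw [hh1, hh2]
          · rcases hp1 with hh1 | hh1
            · rcases hp2 with hh2 | hh2
              · rw [hh1, hh2]
              · exact absurd (by rw [hh2]; exact ht) hb2
            · exact absurd (by rw [hh1]; exact ht) hb1
        exact hxy (hc1.trans (by rw [hpp]; exact conn_symm hc2))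
      have dab : ga ≠ gb := hdist ga pa gb pb a b hIa hEa hCa hBa hIb hEb hCb hBb
        (dA a (by simp) b (by simp) hab)
      have dac : ga ≠ gc := hdist ga pa gc pc a c hIa hEa hCa hBa hIc hEc hCc hBc
        (dA a (by simp) c (by simp) hac)
      have dad : ga ≠ gd := hdist ga pa gd pd a d hIa hEa hCa hBa hId hEd hCd hBd
        (dA a (by simp) d (by simp) had)
      have dae : ga ≠ ge := hdist ga pa ge pe a e hIa hEa hCa hBa hIe hEe hCe hBe hae'
      have dbc : gb ≠ gc := hdist gb pb gc pc b c hIb hEb hCb hBb hIc hEc hCc hBc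
        (dA b (by simp) c (by simp) hbc)
      have dbd : gb ≠ gd := hdist gb pb gd pd b d hIb hEb hCb hBb hId hEd hCd hBd
        (dA b (by simp) d (by simp) hbd)
      have dbe : gb ≠ ge := hdist gb pb ge pe b e hIb hEb hCb hBb hIe hEe hCe hBe
        (dE b (by simp) e (by simp) hbe)
      have dcd : gc ≠ gd := hdist gc pc gd pd c d hIc hEc hCc hBc hId hEd hCd hBd
        (dA c (by simp) d (by simp) hcd)
      have dce : gc ≠ ge := hdist gc pc ge pe c e hIc hEc hCc hBc hIe hEe hCe hBe
        (dE c (by simp) e (by simp) hce)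
      have dde : gd ≠ ge := hdist gd pd ge pe d e hId hEd hCd hBd hIe hEe hCe hBe
        (dE d (by simp) e (by simp) hde)
      have hsub : ({ga, gb, gc, gd, ge} : Set N.toMDigraph.E) ⊆
          {g | IncidentCut (top N.toMDigraph) B g} := by
        intro x hx
        simp only [Set.mem_insert_iff, Set.mem_singleton_iff] at hx
        rcases hx with rfl | rfl | rfl | rfl | rfl <;> assumption
      have h5 : ({ga, gb, gc, gd, ge} : Set N.toMDigraph.E).ncard = 5 := by
        rw [Set.ncard_insert_of_notMem (by simp [dab, dac, dad, dae]) (Set.toFinite _),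
            Set.ncard_insert_of_notMem (by simp [dbc, dbd, dbe]) (Set.toFinite _),
            Set.ncard_insert_of_notMem (by simp [dcd, dce]) (Set.toFinite _),
            Set.ncard_insert_of_notMem (by simp [dde]) (Set.toFinite _),
            Set.ncard_singleton]
      have hle5 : 5 ≤ N.blobDeg B := by
        have hmono := Set.ncard_le_ncard hsub (Set.toFinite _)
        rw [h5] at hmono
        have hbdeq : N.blobDeg B = ({g | IncidentCut (top N.toMDigraph) B g} :
            Set N.toMDigraph.E).ncard := Nat.card_coe_set_eq _
        omega
      by_cases hroot : N.root ∈ B.verts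
      · exact ⟨N.blobDeg B + 1, ⟨hBblob, Or.inl ⟨hroot, rfl⟩⟩, by omega⟩
      · exact ⟨N.blobDeg B, ⟨hBblob, Or.inr ⟨hroot, rfl⟩⟩, by omega⟩
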